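/- If (1-p_u)C'(p_u) + C(p_u) + r ≤ 0, then J(p) = λ(rp + C(p))/(1-p) is non-increasing on [p_l, p_u], hence attains its minimum over [p_l, p_u] at p_u. -/

import Mathlib

/-- If (1-p_u)C'(p_u) + C(p_u) + r ≤ 0, then J(p) = λ(rp + C(p))/(1-p) is
non-increasing on [p_l, p_u], hence attains its minimum over [p_l, p_u] at p_u. -/
theorem stmt_3 (lam r pl pu : ℝ) (hlam : 0 < lam) (hr : 0 < r)
    (hpl : 0 < pl) (hplu : pl < pu) (hpu : pu < 1)
    (C C' : ℝ → ℝ)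
    (hconv : ConvexOn ℝ (Set.Icc pl pu) C)
    (hderiv : ∀ q ∈ Set.Icc pl pu, HasDerivAt C (C' q) q)
    (hcont : ContinuousOn C' (Set.Icc pl pu))
    (hcond : (1 - pu) * C' pu + C pu + r ≤ 0) :
    AntitoneOn (fun q => lam * (r * q + C q) / (1 - q)) (Set.Icc pl pu) ∧
    ∀ q ∈ Set.Icc pl pu,
      lam * (r * pu + C pu) / (1 - pu) ≤ lam * (r * q + C q) / (1 - q) := by
  set J : ℝ → ℝ := fun q => lam * (r * q + C q) / (1 - q) with hJ
  -- derivative of J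
  have hJd : ∀ q ∈ Set.Icc pl pu,
      HasDerivAt J (lam * ((1 - q) * C' q + C q + r) / (1 - q) ^ 2) q := by
    intro q hq
    have hq1 : (1 : ℝ) - q ≠ 0 := by
      have : q < 1 := lt_of_le_of_lt hq.2 hpu
      linarith
    have hnum : HasDerivAt (fun q => lam * (r * q + C q)) (lam * (r + C' q)) q := by
      have := ((hasDerivAt_id q).const_mul r).add (hderiv q hq)
      simpa using this.const_mul lam
    have hden : HasDerivAt (fun q : ℝ => 1 - q) (-1) q := by
      simpa using (hasDerivAt_id q).const_sub 1
    have := hnum.div hden hq1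
    exact this.congr_deriv (by ring)
  have hantiJ : AntitoneOn J (Set.Icc pl pu) := by
    apply antitoneOn_of_deriv_nonpos (convex_Icc pl pu)
    · exact fun q hq => ((hJd q hq).continuousAt).continuousWithinAt
    · intro q hq
      rw [interior_Icc] at hq
      exact ((hJd q (Set.mem_Icc_of_Ioo hq)).differentiableAt).differentiableWithinAt
    · intro q hq
      rw [interior_Icc] at hq
      have hqI : q ∈ Set.Icc pl pu := Set.mem_Icc_of_Ioo hq
      rw [(hJd q hqI).deriv]
      -- key inequality: (1-q)C'(q) + C(q) + r ≤ 0
      have hqpu : q < pu := hq.2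
      have hpuI : pu ∈ Set.Icc pl pu := ⟨le_of_lt hplu, le_refl pu⟩
      have h1 : C' q ≤ slope C q pu :=
        hconv.le_slope_of_hasDerivAt hqI hpuI hqpu (hderiv q hqI)
      have h2 : slope C q pu ≤ C' pu :=
        hconv.slope_le_of_hasDerivAt hqI hpuI hqpu (hderiv pu hpuI)
      set s := slope C q pu with hs
      have hCq : C q = C pu - s * (pu - q) := by
        have hne : pu - q ≠ 0 := by linarith
        rw [hs, slope_def_field]
        field_simp
        ring
      have hq1 : (0:ℝ) < 1 - q := by
        have : q < 1 := lt_trans hqpu hpu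
        linarith
      have hkey : (1 - q) * C' q + C q + r ≤ 0 := by
        have step1 : (1 - q) * C' q ≤ (1 - q) * s :=
          mul_le_mul_of_nonneg_left h1 (le_of_lt hq1)
        have step2 : (1 - pu) * s ≤ (1 - pu) * C' pu :=
          mul_le_mul_of_nonneg_left h2 (by linarith)
        calc (1 - q) * C' q + C q + r ≤ (1 - q) * s + (C pu - s * (pu - q)) + r := by
              rw [hCq] at *; linarith
          _ = (1 - pu) * s + C pu + r := by ring
          _ ≤ (1 - pu) * C' pu + C pu + r := by linarith
          _ ≤ 0 := hcond
      have hnum : lam * ((1 - q) * C' q + C q + r) ≤ 0 :=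
        mul_nonpos_of_nonneg_of_nonpos (le_of_lt hlam) hkey
      exact div_nonpos_of_nonpos_of_nonneg hnum (sq_nonneg _)
  refine ⟨hantiJ, fun q hq => ?_⟩
  exact hantiJ hq ⟨le_of_lt hplu, le_refl pu⟩ hq.2
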